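/- Let E be a valued vector space over K and let F = K^m with the valuation ṽ(y) = min_i v(y_i). Identifying E ⊗_K K^m with E^m, the tensor product valuation u_E ⊗ ṽ equals the direct sum valuation: (u_E ⊗ ṽ)(x₀,…,x_{m−1}) = min_i u_E(x_i). -/

import Mathlib

open scoped TensorProduct

/-- The tensor product valuation on `E ⊗[K] F` (supremum over presentations). -/
noncomputable def tensVal {K E F : Type*} [Field K]
    [AddCommGroup E] [Module K E] [AddCommGroup F] [Module K F]
    (uE : E → EReal) (uF : F → EReal) (z : E ⊗[K] F) : EReal :=
  sSup { r : EReal | ∃ P : List (E × F),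
    (P.map fun p => p.1 ⊗ₜ[K] p.2).sum = z ∧
    r = (P.map fun p => uE p.1 + uF p.2).foldr min ⊤ }

/-- Monotonicity of `foldr min ⊤` along a pointwise inequality. -/
lemma foldr_min_mono {α : Type*} (f g : α → EReal) (l : List α)
    (h : ∀ a ∈ l, f a ≤ g a) :
    (l.map f).foldr min ⊤ ≤ (l.map g).foldr min ⊤ := by
  induction l with
  | nil => simp
  | cons a t ih =>
    simp only [List.map_cons, List.foldr_cons]
    exact min_le_min (h a (by simp)) (ih fun b hb => h b (by simp [hb]))

/-- The min of values bounds below the value of a sum. -/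
lemma foldr_min_le_val_sum {E : Type*} [AddCommGroup E]
    (uE : E → EReal) (uE0 : uE 0 = ⊤)
    (uEadd : ∀ x y, min (uE x) (uE y) ≤ uE (x + y)) (l : List E) :
    (l.map uE).foldr min ⊤ ≤ uE l.sum := by
  induction l with
  | nil => simp [uE0]
  | cons a t ih =>
    simp only [List.map_cons, List.foldr_cons, List.sum_cons]
    exact le_trans (min_le_min le_rfl ih) (uEadd a t.sum)

lemma iInf_fin_succ {n : ℕ} (f : Fin (n + 1) → EReal) :
    ⨅ i, f i = min (f 0) (⨅ i : Fin n, f i.succ) := by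
  apply le_antisymm
  · exact le_min (iInf_le _ 0) (le_iInf fun i => iInf_le _ i.succ)
  · refine le_iInf fun i => ?_
    refine Fin.cases ?_ (fun j => ?_) i
    · exact min_le_left _ _
    · exact le_trans (min_le_right _ _) (iInf_le _ j)

lemma foldr_min_finRange {n : ℕ} (f : Fin n → EReal) :
    ((List.finRange n).map f).foldr min ⊤ = ⨅ i, f i := by
  induction n with
  | zero => simp [List.finRange, iInf_of_empty]
  | succ n ih =>
    rw [List.finRange_succ, iInf_fin_succ f]
    simp only [List.map_cons, List.foldr_cons, List.map_map]
    rw [show (f ∘ Fin.succ) = fun i : Fin n => f i.succ from rfl] at *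
    rw [ih (fun i : Fin n => f i.succ)]

theorem tensVal_with_min_valuation {K E : Type*} [Field K]
    [AddCommGroup E] [Module K E]
    (v : K → EReal) (hv0 : v 0 = ⊤) (hvbot : ∀ a, v a ≠ ⊥) (hv1 : v 1 = 0)
    (hvmul : ∀ a b, v (a * b) = v a + v b)
    (hvadd : ∀ a b, min (v a) (v b) ≤ v (a + b))
    (uE : E → EReal) (uEbot : ∀ x, uE x ≠ ⊥)
    (uEsmul : ∀ (a : K) (x : E), uE (a • x) = v a + uE x)
    (uEadd : ∀ x y, min (uE x) (uE y) ≤ uE (x + y))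
    {m : ℕ} (x : Fin m → E) :
    tensVal uE (fun y : Fin m → K => ⨅ i, v (y i))
        (∑ i, x i ⊗ₜ[K] (Pi.single i 1 : Fin m → K)) = ⨅ i, uE (x i) := by
  have uE0 : uE 0 = ⊤ := by
    have h := uEsmul 0 0
    rw [zero_smul, hv0] at h
    have : uE (0 : E) ≠ ⊥ := uEbot 0
    rw [EReal.top_add_of_ne_bot this] at h
    exact h
  -- the auxiliary valuation on K^m
  set vt : (Fin m → K) → EReal := fun y => ⨅ i, v (y i) with hvt
  have hvt_single : ∀ i : Fin m, vt (Pi.single i 1) = 0 := by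
    intro i
    simp only [hvt]
    apply le_antisymm
    · have h := iInf_le (fun j => v ((Pi.single i 1 : Fin m → K) j)) i
      simpa [Pi.single_eq_same, hv1] using h
    · refine le_iInf fun j => ?_
      rcases eq_or_ne j i with rfl | hj
      · rw [Pi.single_eq_same, hv1]
      · rw [Pi.single_eq_of_ne hj, hv0]; exact le_top
  apply le_antisymm
  · -- sSup ≤ ⨅
    apply sSup_le
    rintro r ⟨P, hPsum, rfl⟩
    refine le_iInf fun i => ?_
    -- coordinate projection map
    set φ : E ⊗[K] (Fin m → K) →ₗ[K] E :=
      TensorProduct.lift (((LinearMap.lsmul K E).flip).compl₂ (LinearMap.proj i)) with hφ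
    have hφtmul : ∀ (a : E) (b : Fin m → K), φ (a ⊗ₜ[K] b) = b i • a := fun a b => rfl
    have key : (P.map fun p => (p.2 i) • p.1).sum = x i := by
      have := congrArg φ hPsum
      rw [map_list_sum, List.map_map, map_sum] at this
      simp only [hφtmul] at this
      have hsum : (∑ k, ((Pi.single k 1 : Fin m → K) i) • x k) = x i := by
        rw [Finset.sum_eq_single i]
        · rw [Pi.single_eq_same, one_smul]
        · intro k _ hk
          rw [Pi.single_eq_of_ne (Ne.symm hk), zero_smul]
        · intro h; exact absurd (Finset.mem_univ i) h
      rw [hsum] at this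
      rw [show (fun p : E × (Fin m → K) => p.2 i • p.1)
          = ⇑φ ∘ fun p : E × (Fin m → K) => p.1 ⊗ₜ[K] p.2 from
          funext fun p => (hφtmul p.1 p.2).symm]
      exact this
    calc (P.map fun p => uE p.1 + vt p.2).foldr min ⊤
        ≤ (P.map fun p => uE ((p.2 i) • p.1)).foldr min ⊤ := by
          apply foldr_min_mono
          intro p _
          rw [uEsmul, add_comm (v (p.2 i))]
          exact add_le_add le_rfl (iInf_le _ i)
      _ = ((P.map fun p => (p.2 i) • p.1).map uE).foldr min ⊤ := by
          rw [List.map_map]; rfl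
      _ ≤ uE (P.map fun p => (p.2 i) • p.1).sum :=
          foldr_min_le_val_sum uE uE0 uEadd _
      _ = uE (x i) := by rw [key]
  · -- ⨅ ≤ sSup : use the canonical presentation
    apply le_sSup
    refine ⟨(List.finRange m).map fun i => (x i, (Pi.single i 1 : Fin m → K)), ?_, ?_⟩
    · rw [List.map_map, Fin.sum_univ_def]
      rfl
    · rw [List.map_map]
      have : ((fun p : E × (Fin m → K) => uE p.1 + vt p.2) ∘
          fun i => (x i, (Pi.single i 1 : Fin m → K))) = fun i => uE (x i) := by
        funext i
        simp [hvt_single i]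
      rw [this, foldr_min_finRange]
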